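/- Let A ∈ ℂ^{n×n} be Hermitian and B ∈ ℂ^{n×n} be Hermitian positive definite with condition number κ(B) = ‖B‖₂·‖B⁻¹‖₂. Let Q ∈ ℂ^{n×r} with Q*BQ = I_r and T = Q*AQ, and suppose ‖A − (BQ)T(BQ)*‖_B ≤ 2ε for some ε ≥ 0. Let Ω ∈ ℂ^{n×r} be such that F := Q*BΩ is invertible, and set T̃ = (F*)⁻¹(Ω*AΩ)F⁻¹. Let μ₁ ≥ μ₂ ≥ … ≥ μ_r be the eigenvalues of the Hermitian matrix T sorted in decreasing order, and θ₁ ≥ θ₂ ≥ … ≥ θ_r be those of the Hermitian matrix T̃. Then for every j ∈ {1,…,r}, |μ_j − θ_j| ≤ 2ε·√κ(B)·σ_max(Ω)²/σ_min(F)². -/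

import Mathlib

open Matrix ComplexOrder
noncomputable section
def vecNorm2 {m : Type*} [Fintype m] (x : m → ℂ) : ℝ :=
  Real.sqrt (∑ i, ‖x i‖ ^ 2)

lemma dot_self_re {m : Type*} [Fintype m] (x : m → ℂ) :
    (star x ⬝ᵥ x).re = ∑ i, ‖x i‖ ^ 2 := by
  simp only [dotProduct, Complex.re_sum, Pi.star_apply, RCLike.star_def]
  exact Finset.sum_congr rfl fun i _ => by
    rw [Complex.mul_re, Complex.conj_re, Complex.conj_im, Complex.sq_norm,
      Complex.normSq_apply]; ring

lemma vecNorm2_eq_norm {m : Type*} [Fintype m] (x : m → ℂ) :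
    vecNorm2 x = ‖(WithLp.equiv 2 (m → ℂ)).symm x‖ := by
  rw [EuclideanSpace.norm_eq]; rfl

lemma toEuclideanLin_apply' {m p : Type*} [Fintype m] [Fintype p] [DecidableEq p]
    (M : Matrix m p ℂ)
    (x : p → ℂ) : Matrix.toEuclideanLin M ((WithLp.equiv 2 (p → ℂ)).symm x)
      = (WithLp.equiv 2 (m → ℂ)).symm (M *ᵥ x) := rfl

lemma vecNorm2_nonneg {m : Type*} [Fintype m] (x : m → ℂ) : 0 ≤ vecNorm2 x :=
  Real.sqrt_nonneg _

lemma vecNorm2_sq {m : Type*} [Fintype m] (x : m → ℂ) :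
    vecNorm2 x ^ 2 = (star x ⬝ᵥ x).re := by
  rw [dot_self_re, vecNorm2, Real.sq_sqrt]
  positivity

lemma vecNorm2_pos {m : Type*} [Fintype m] {x : m → ℂ} (hx : x ≠ 0) : 0 < vecNorm2 x := by
  rw [vecNorm2_eq_norm]
  simp only [norm_pos_iff]
  exact fun h => hx (by simpa using congrArg (WithLp.equiv 2 (m → ℂ)) h)

lemma vecNorm2_zero {m : Type*} [Fintype m] : vecNorm2 (0 : m → ℂ) = 0 := by
  simp [vecNorm2]

/-- Cauchy–Schwarz for the dot product. -/
lemma cs_dot {m : Type*} [Fintype m] (x y : m → ℂ) :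
    ‖star x ⬝ᵥ y‖ ≤ vecNorm2 x * vecNorm2 y := by
  rw [vecNorm2_eq_norm, vecNorm2_eq_norm]
  exact ((by rw [dotProduct_comm]; rfl : inner ℂ ((WithLp.equiv 2 (m → ℂ)).symm x) ((WithLp.equiv 2 (m → ℂ)).symm y) = star x ⬝ᵥ y) ▸
    norm_inner_le_norm (𝕜 := ℂ) ((WithLp.equiv 2 (m → ℂ)).symm x) ((WithLp.equiv 2 (m → ℂ)).symm y))

lemma exists_mulVec_bound {m p : Type*} [Fintype m] [Fintype p] [DecidableEq p]
    (M : Matrix m p ℂ) : ∃ C : ℝ, 0 ≤ C ∧ ∀ v, vecNorm2 (M *ᵥ v) ≤ C * vecNorm2 v := by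
  let f := LinearMap.toContinuousLinearMap (Matrix.toEuclideanLin M)
  refine ⟨‖f‖, norm_nonneg _, fun v => ?_⟩
  have := f.le_opNorm ((WithLp.equiv 2 (p → ℂ)).symm v)
  rw [vecNorm2_eq_norm, vecNorm2_eq_norm]
  simpa [f, LinearMap.coe_toContinuousLinearMap', toEuclideanLin_apply'] using this

def specNorm {m p : Type*} [Fintype m] [Fintype p] (M : Matrix m p ℂ) : ℝ :=
  sSup {t : ℝ | ∃ x : p → ℂ, x ≠ 0 ∧ t = vecNorm2 (M *ᵥ x) / vecNorm2 x}

lemma specNorm_bddAbove {m p : Type*} [Fintype m] [Fintype p] [DecidableEq p]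
    (M : Matrix m p ℂ) :
    BddAbove {t : ℝ | ∃ x : p → ℂ, x ≠ 0 ∧ t = vecNorm2 (M *ᵥ x) / vecNorm2 x} := by
  obtain ⟨C, hC0, hC⟩ := exists_mulVec_bound M
  refine ⟨C, fun t ht => ?_⟩
  obtain ⟨x, hx, rfl⟩ := ht
  rw [div_le_iff₀ (vecNorm2_pos hx)]
  exact hC x

lemma specNorm_nonneg {m p : Type*} [Fintype m] [Fintype p] [DecidableEq p] [Nonempty p]
    (M : Matrix m p ℂ) : 0 ≤ specNorm M := by
  have hx : (fun _ : p => (1:ℂ)) ≠ 0 := by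
    intro h; simpa using congrFun h (Classical.arbitrary p)
  have hmem : vecNorm2 (M *ᵥ fun _ => 1) / vecNorm2 (fun _ : p => (1:ℂ)) ∈
      {t : ℝ | ∃ x : p → ℂ, x ≠ 0 ∧ t = vecNorm2 (M *ᵥ x) / vecNorm2 x} := ⟨_, hx, rfl⟩
  exact le_trans (div_nonneg (vecNorm2_nonneg _) (vecNorm2_nonneg _)) (le_csSup (specNorm_bddAbove M) hmem)

lemma vecNorm2_mulVec_le {m p : Type*} [Fintype m] [Fintype p] [DecidableEq p]
    (M : Matrix m p ℂ) (x : p → ℂ) :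
    vecNorm2 (M *ᵥ x) ≤ specNorm M * vecNorm2 x := by
  rcases eq_or_ne x 0 with rfl | hx
  · simp [vecNorm2_zero, Matrix.mulVec_zero]
  · have hmem : vecNorm2 (M *ᵥ x) / vecNorm2 x ∈
        {t : ℝ | ∃ x : p → ℂ, x ≠ 0 ∧ t = vecNorm2 (M *ᵥ x) / vecNorm2 x} := ⟨x, hx, rfl⟩
    have := le_csSup (specNorm_bddAbove M) hmem
    rw [div_le_iff₀ (vecNorm2_pos hx)] at this
    exact this

def Binner {m : Type*} [Fintype m] (B : Matrix m m ℂ) (x y : m → ℂ) : ℂ :=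
  star y ⬝ᵥ B *ᵥ x

def vecBnorm {m : Type*} [Fintype m] (B : Matrix m m ℂ) (x : m → ℂ) : ℝ :=
  Real.sqrt (star x ⬝ᵥ B *ᵥ x).re

def matBnorm {m : Type*} [Fintype m] (B M : Matrix m m ℂ) : ℝ :=
  sSup {t : ℝ | ∃ x : m → ℂ, x ≠ 0 ∧ t = vecBnorm B (M *ᵥ x) / vecBnorm B x}

lemma vecNorm2_eq_sqrt_dot {m : Type*} [Fintype m] (x : m → ℂ) :
    vecNorm2 x = Real.sqrt (star x ⬝ᵥ x).re := by rw [vecNorm2, dot_self_re]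

/-- quadratic form bound by spectral norm -/
lemma quad_le_specNorm {m : Type*} [Fintype m] [DecidableEq m] (M : Matrix m m ℂ) (x : m → ℂ) :
    (star x ⬝ᵥ M *ᵥ x).re ≤ specNorm M * vecNorm2 x ^ 2 := by
  calc (star x ⬝ᵥ M *ᵥ x).re ≤ ‖star x ⬝ᵥ M *ᵥ x‖ := Complex.re_le_norm _
    _ ≤ vecNorm2 x * vecNorm2 (M *ᵥ x) := cs_dot _ _
    _ ≤ vecNorm2 x * (specNorm M * vecNorm2 x) := by
        exact mul_le_mul_of_nonneg_left (vecNorm2_mulVec_le M x) (vecNorm2_nonneg x)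
    _ = specNorm M * vecNorm2 x ^ 2 := by ring

section SqrtCompat
open scoped MatrixOrder

def Matrix.PosSemidef.sqrt {m : Type*} [Fintype m] [DecidableEq m] {A : Matrix m m ℂ}
    (_ : A.PosSemidef) : Matrix m m ℂ := CFC.sqrt A

lemma Matrix.PosSemidef.posSemidef_sqrt {m : Type*} [Fintype m] [DecidableEq m]
    {A : Matrix m m ℂ} (hA : A.PosSemidef) : hA.sqrt.PosSemidef :=
  nonneg_iff_posSemidef.mp (CFC.sqrt_nonneg A)

lemma Matrix.PosSemidef.sqrt_mul_self {m : Type*} [Fintype m] [DecidableEq m]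
    {A : Matrix m m ℂ} (hA : A.PosSemidef) : hA.sqrt * hA.sqrt = A :=
  CFC.sqrt_mul_sqrt_self A hA.nonneg

end SqrtCompat

section Bnorm
variable {m : Type*} [Fintype m] [DecidableEq m] {B : Matrix m m ℂ}

lemma dot_mulVec_self {N : Matrix m m ℂ} (u : m → ℂ) :
    star (N *ᵥ u) ⬝ᵥ (N *ᵥ u) = star u ⬝ᵥ (Nᴴ * N) *ᵥ u := by
  rw [Matrix.star_mulVec, ← Matrix.dotProduct_mulVec, Matrix.mulVec_mulVec]

lemma sqrt_herm (hB : B.PosDef) : hB.posSemidef.sqrt.IsHermitian :=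
  hB.posSemidef.posSemidef_sqrt.1

lemma sqrt_inv_mul_sqrt (hB : B.PosDef) : hB.posSemidef.sqrt⁻¹ * hB.posSemidef.sqrt = 1 := by
  apply Matrix.nonsing_inv_mul
  have h : hB.posSemidef.sqrt.det * hB.posSemidef.sqrt.det = B.det := by
    rw [← Matrix.det_mul, hB.posSemidef.sqrt_mul_self]
  exact isUnit_of_mul_isUnit_left (h ▸ (Matrix.isUnit_iff_isUnit_det B).mp hB.isUnit)

lemma sqrt_inv_herm (hB : B.PosDef) : (hB.posSemidef.sqrt⁻¹)ᴴ = hB.posSemidef.sqrt⁻¹ := by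
  rw [Matrix.conjTranspose_nonsing_inv, (sqrt_herm hB).eq]

lemma vecBnorm_eq_sqrtMul (hB : B.PosDef) (x : m → ℂ) :
    vecBnorm B x = vecNorm2 (hB.posSemidef.sqrt *ᵥ x) := by
  rw [vecBnorm, vecNorm2_eq_sqrt_dot, dot_mulVec_self, (sqrt_herm hB).eq,
    hB.posSemidef.sqrt_mul_self]

lemma vecBnorm_nonneg (x : m → ℂ) : 0 ≤ vecBnorm B x := Real.sqrt_nonneg _

lemma vecBnorm_pos (hB : B.PosDef) {x : m → ℂ} (hx : x ≠ 0) : 0 < vecBnorm B x := by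
  have := hB.re_dotProduct_pos hx
  simp only [RCLike.re_to_complex] at this
  exact Real.sqrt_pos.mpr this

lemma matBnorm_bddAbove (hB : B.PosDef) (E : Matrix m m ℂ) :
    BddAbove {t : ℝ | ∃ x : m → ℂ, x ≠ 0 ∧ t = vecBnorm B (E *ᵥ x) / vecBnorm B x} := by
  obtain ⟨C, hC0, hC⟩ :=
    exists_mulVec_bound (hB.posSemidef.sqrt * E * hB.posSemidef.sqrt⁻¹)
  refine ⟨C, fun t ht => ?_⟩
  obtain ⟨x, hx, rfl⟩ := ht
  rw [div_le_iff₀ (vecBnorm_pos hB hx)]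
  have key : hB.posSemidef.sqrt *ᵥ (E *ᵥ x)
      = (hB.posSemidef.sqrt * E * hB.posSemidef.sqrt⁻¹) *ᵥ (hB.posSemidef.sqrt *ᵥ x) := by
    rw [Matrix.mulVec_mulVec, Matrix.mulVec_mulVec, Matrix.mul_assoc,
      sqrt_inv_mul_sqrt hB, Matrix.mul_one]
  rw [vecBnorm_eq_sqrtMul hB, vecBnorm_eq_sqrtMul hB, key]
  exact hC _

lemma vecBnorm_mulVec_le (hB : B.PosDef) (E : Matrix m m ℂ) (x : m → ℂ) :
    vecBnorm B (E *ᵥ x) ≤ matBnorm B E * vecBnorm B x := by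
  rcases eq_or_ne x 0 with rfl | hx
  · simp [vecBnorm, Matrix.mulVec_zero]
  · have hmem : vecBnorm B (E *ᵥ x) / vecBnorm B x ∈
        {t : ℝ | ∃ x : m → ℂ, x ≠ 0 ∧ t = vecBnorm B (E *ᵥ x) / vecBnorm B x} := ⟨x, hx, rfl⟩
    have := le_csSup (matBnorm_bddAbove hB E) hmem
    rwa [div_le_iff₀ (vecBnorm_pos hB hx)] at this

lemma matBnorm_nonneg [Nonempty m] (hB : B.PosDef) (E : Matrix m m ℂ) : 0 ≤ matBnorm B E := by
  have hx : (fun _ : m => (1:ℂ)) ≠ 0 := by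
    intro h; simpa using congrFun h (Classical.arbitrary m)
  exact le_trans (div_nonneg (vecBnorm_nonneg _) (vecBnorm_nonneg _))
    (le_csSup (matBnorm_bddAbove hB E) ⟨_, hx, rfl⟩)

/-- ‖x‖² ≤ specNorm B⁻¹ ‖Sx‖² -/
lemma sq_le_spec_inv_mul (hB : B.PosDef) (x : m → ℂ) :
    vecNorm2 x ^ 2 ≤ specNorm B⁻¹ * vecNorm2 (hB.posSemidef.sqrt *ᵥ x) ^ 2 := by
  set S := hB.posSemidef.sqrt with hS
  have hxS : x = S⁻¹ *ᵥ (S *ᵥ x) := by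
    rw [Matrix.mulVec_mulVec, sqrt_inv_mul_sqrt hB, Matrix.one_mulVec]
  have key : ∀ u : m → ℂ, vecNorm2 (S⁻¹ *ᵥ u) ^ 2 ≤ specNorm B⁻¹ * vecNorm2 u ^ 2 := by
    intro u
    have h1 : vecNorm2 (S⁻¹ *ᵥ u) ^ 2 = (star u ⬝ᵥ B⁻¹ *ᵥ u).re := by
      rw [vecNorm2_sq, dot_mulVec_self, sqrt_inv_herm hB]
      congr 3
      rw [← Matrix.mul_inv_rev, hB.posSemidef.sqrt_mul_self]
    rw [h1]
    exact quad_le_specNorm _ _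
  calc vecNorm2 x ^ 2 = vecNorm2 (S⁻¹ *ᵥ (S *ᵥ x)) ^ 2 := by rw [← hxS]
    _ ≤ specNorm B⁻¹ * vecNorm2 (S *ᵥ x) ^ 2 := key _

/-- ‖Sx‖² ≤ specNorm B ‖x‖² -/
lemma sqrtMul_sq_le (hB : B.PosDef) (x : m → ℂ) :
    vecNorm2 (hB.posSemidef.sqrt *ᵥ x) ^ 2 ≤ specNorm B * vecNorm2 x ^ 2 := by
  have h : vecNorm2 (hB.posSemidef.sqrt *ᵥ x) ^ 2 = (star x ⬝ᵥ B *ᵥ x).re := by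
    rw [vecNorm2_sq, dot_mulVec_self, (sqrt_herm hB).eq, hB.posSemidef.sqrt_mul_self]
  rw [h]
  exact quad_le_specNorm _ _

end Bnorm

/-- Main analytic bound: the Euclidean quadratic form of `E` is controlled by
`matBnorm B E` times `√(κ(B))`. -/
lemma quad_re_abs_le {m : Type*} [Fintype m] [DecidableEq m] [Nonempty m]
    {B : Matrix m m ℂ} (hB : B.PosDef) (E : Matrix m m ℂ) (z : m → ℂ) :
    |(star z ⬝ᵥ E *ᵥ z).re| ≤
      matBnorm B E * Real.sqrt (specNorm B * specNorm B⁻¹) * vecNorm2 z ^ 2 := by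
  have hκ : (0:ℝ) ≤ specNorm B * specNorm B⁻¹ :=
    mul_nonneg (specNorm_nonneg B) (specNorm_nonneg B⁻¹)
  set c : ℝ := matBnorm B E * Real.sqrt (specNorm B * specNorm B⁻¹) * vecNorm2 z with hc
  have hc0 : 0 ≤ c :=
    mul_nonneg (mul_nonneg (matBnorm_nonneg hB E) (Real.sqrt_nonneg _)) (vecNorm2_nonneg z)
  have key : vecNorm2 (E *ᵥ z) ≤ c := by
    have h1 : vecNorm2 (E *ᵥ z) ^ 2 ≤ specNorm B⁻¹ * vecBnorm B (E *ᵥ z) ^ 2 := by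
      have := sq_le_spec_inv_mul hB (E *ᵥ z)
      rwa [← vecBnorm_eq_sqrtMul hB] at this
    have h2 : vecBnorm B (E *ᵥ z) ^ 2 ≤ (matBnorm B E * vecBnorm B z) ^ 2 :=
      pow_le_pow_left₀ (vecBnorm_nonneg _) (vecBnorm_mulVec_le hB E z) 2
    have h3 : vecBnorm B z ^ 2 ≤ specNorm B * vecNorm2 z ^ 2 := by
      rw [vecBnorm_eq_sqrtMul hB]; exact sqrtMul_sq_le hB z
    have h4 : vecNorm2 (E *ᵥ z) ^ 2 ≤ c ^ 2 := by
      have hs : Real.sqrt (specNorm B * specNorm B⁻¹) ^ 2 = specNorm B * specNorm B⁻¹ :=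
        Real.sq_sqrt hκ
      have hB2 : (0:ℝ) ≤ matBnorm B E ^ 2 := sq_nonneg _
      calc vecNorm2 (E *ᵥ z) ^ 2 ≤ specNorm B⁻¹ * vecBnorm B (E *ᵥ z) ^ 2 := h1
        _ ≤ specNorm B⁻¹ * (matBnorm B E * vecBnorm B z) ^ 2 :=
            mul_le_mul_of_nonneg_left h2 (specNorm_nonneg B⁻¹)
        _ = specNorm B⁻¹ * matBnorm B E ^ 2 * vecBnorm B z ^ 2 := by ring
        _ ≤ specNorm B⁻¹ * matBnorm B E ^ 2 * (specNorm B * vecNorm2 z ^ 2) := by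
            exact mul_le_mul_of_nonneg_left h3
              (mul_nonneg (specNorm_nonneg B⁻¹) hB2)
        _ = c ^ 2 := by rw [hc, mul_pow, mul_pow, hs]; ring
    calc vecNorm2 (E *ᵥ z) = Real.sqrt (vecNorm2 (E *ᵥ z) ^ 2) :=
          (Real.sqrt_sq (vecNorm2_nonneg _)).symm
      _ ≤ Real.sqrt (c ^ 2) := Real.sqrt_le_sqrt h4
      _ = c := Real.sqrt_sq hc0
  calc |(star z ⬝ᵥ E *ᵥ z).re| ≤ ‖star z ⬝ᵥ E *ᵥ z‖ := Complex.abs_re_le_norm _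
    _ ≤ vecNorm2 z * vecNorm2 (E *ᵥ z) := cs_dot _ _
    _ ≤ vecNorm2 z * c := mul_le_mul_of_nonneg_left key (vecNorm2_nonneg z)
    _ = matBnorm B E * Real.sqrt (specNorm B * specNorm B⁻¹) * vecNorm2 z ^ 2 := by
        rw [hc]; ring

section Weyl
variable {r : ℕ}

open scoped InnerProductSpace in
lemma eigen_apply_basis {M : Matrix (Fin r) (Fin r) ℂ} (hM : M.IsHermitian) (i : Fin r) :
    Matrix.toEuclideanLin M (hM.eigenvectorBasis i)
      = (hM.eigenvalues i : ℂ) • hM.eigenvectorBasis i := by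
  have h := hM.mulVec_eigenvectorBasis i
  apply (WithLp.equiv 2 (Fin r → ℂ)).injective
  change M *ᵥ ⇑(hM.eigenvectorBasis i) = (hM.eigenvalues i : ℂ) • ⇑(hM.eigenvectorBasis i)
  rw [h]
  funext j
  simp [Complex.real_smul]

open scoped InnerProductSpace in
lemma spectral_re_inner {M : Matrix (Fin r) (Fin r) ℂ} (hM : M.IsHermitian)
    (x : EuclideanSpace ℂ (Fin r)) :
    (⟪x, Matrix.toEuclideanLin M x⟫_ℂ).re
      = ∑ i, hM.eigenvalues i * ‖(⟪hM.eigenvectorBasis i, x⟫_ℂ)‖ ^ 2 := by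
  set b := hM.eigenvectorBasis with hb
  have hsym := (Matrix.isHermitian_iff_isSymmetric).mp hM
  have key : ⟪x, Matrix.toEuclideanLin M x⟫_ℂ
      = ∑ i, (hM.eigenvalues i : ℂ) * (⟪x, b i⟫_ℂ * ⟪b i, x⟫_ℂ) := by
    rw [← b.sum_inner_mul_inner x (Matrix.toEuclideanLin M x)]
    refine Finset.sum_congr rfl fun i _ => ?_
    have : ⟪b i, Matrix.toEuclideanLin M x⟫_ℂ = (hM.eigenvalues i : ℂ) * ⟪b i, x⟫_ℂ := by
      rw [← hsym (b i) x, eigen_apply_basis hM i, inner_smul_left]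
      simp [Complex.conj_ofReal, hb]
    rw [this]; ring
  rw [key, Complex.re_sum]
  refine Finset.sum_congr rfl fun i _ => ?_
  rw [← inner_conj_symm x (b i), mul_comm ((starRingEnd ℂ) ⟪b i, x⟫_ℂ) (⟪b i, x⟫_ℂ),
    Complex.mul_conj, ← Complex.ofReal_mul, Complex.ofReal_re]
  simp [Complex.normSq_eq_norm_sq]

open scoped InnerProductSpace in
lemma norm_sq_eq_sum_inner {M : Matrix (Fin r) (Fin r) ℂ} (hM : M.IsHermitian)
    (x : EuclideanSpace ℂ (Fin r)) :
    (⟪x, x⟫_ℂ).re = ∑ i, ‖(⟪hM.eigenvectorBasis i, x⟫_ℂ)‖ ^ 2 := by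
  set b := hM.eigenvectorBasis with hb
  rw [← b.sum_inner_mul_inner x x, Complex.re_sum]
  refine Finset.sum_congr rfl fun i _ => ?_
  rw [← inner_conj_symm x (b i), mul_comm ((starRingEnd ℂ) ⟪b i, x⟫_ℂ) (⟪b i, x⟫_ℂ),
    Complex.mul_conj, Complex.ofReal_re]
  simp [Complex.normSq_eq_norm_sq]

open scoped InnerProductSpace in
lemma inner_basis_eq_zero_of_mem_span {ι : Type*} [Fintype ι]
    {F : Type*} [NormedAddCommGroup F] [InnerProductSpace ℂ F]
    (b : OrthonormalBasis ι ℂ F) (S : Set ι) {x : F}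
    (hx : x ∈ Submodule.span ℂ (⇑b '' S)) {k : ι} (hk : k ∉ S) :
    ⟪b k, x⟫_ℂ = 0 := by
  have hle : Submodule.span ℂ (⇑b '' S) ≤ LinearMap.ker ((innerSL ℂ (b k)).toLinearMap) := by
    rw [Submodule.span_le]
    rintro - ⟨i, hi, rfl⟩
    simp only [SetLike.mem_coe, LinearMap.mem_ker, ContinuousLinearMap.coe_coe, innerSL_apply_apply]
    exact b.orthonormal.2 (fun h => hk (h ▸ hi))
  simpa using hle hx

open scoped InnerProductSpace in
lemma quad_ge_of_mem_span {M : Matrix (Fin r) (Fin r) ℂ} (hM : M.IsHermitian)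
    {S : Set (Fin r)} {a : ℝ} (ha : ∀ i ∈ S, a ≤ hM.eigenvalues i)
    {x : EuclideanSpace ℂ (Fin r)} (hx : x ∈ Submodule.span ℂ (⇑hM.eigenvectorBasis '' S)) :
    a * (⟪x, x⟫_ℂ).re ≤ (⟪x, Matrix.toEuclideanLin M x⟫_ℂ).re := by
  rw [spectral_re_inner hM, norm_sq_eq_sum_inner hM, Finset.mul_sum]
  refine Finset.sum_le_sum fun i _ => ?_
  by_cases hi : i ∈ S
  · exact mul_le_mul_of_nonneg_right (ha i hi) (by positivity)
  · rw [inner_basis_eq_zero_of_mem_span hM.eigenvectorBasis S hx hi]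
    simp

open scoped InnerProductSpace in
lemma quad_le_of_mem_span {M : Matrix (Fin r) (Fin r) ℂ} (hM : M.IsHermitian)
    {S : Set (Fin r)} {a : ℝ} (ha : ∀ i ∈ S, hM.eigenvalues i ≤ a)
    {x : EuclideanSpace ℂ (Fin r)} (hx : x ∈ Submodule.span ℂ (⇑hM.eigenvectorBasis '' S)) :
    (⟪x, Matrix.toEuclideanLin M x⟫_ℂ).re ≤ a * (⟪x, x⟫_ℂ).re := by
  rw [spectral_re_inner hM, norm_sq_eq_sum_inner hM, Finset.mul_sum]
  refine Finset.sum_le_sum fun i _ => ?_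
  by_cases hi : i ∈ S
  · exact mul_le_mul_of_nonneg_right (ha i hi) (by positivity)
  · rw [inner_basis_eq_zero_of_mem_span hM.eigenvectorBasis S hx hi]
    simp

lemma finrank_span_basis_image {M : Matrix (Fin r) (Fin r) ℂ} (hM : M.IsHermitian)
    (e : Equiv.Perm (Fin r)) (S : Set (Fin r)) [Fintype S] :
    Module.finrank ℂ
      (Submodule.span ℂ (⇑hM.eigenvectorBasis '' (⇑e '' S))) = Fintype.card S := by
  set b := hM.eigenvectorBasis
  have hinj : Function.Injective (fun i : S => e i) :=
    e.injective.comp Subtype.val_injective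
  have hon : Orthonormal ℂ (fun i : S => b (e i)) := b.orthonormal.comp _ hinj
  have hrange : Set.range (fun i : S => b (e i)) = ⇑b '' (⇑e '' S) := by
    rw [Set.image_image]
    ext y
    simp [Set.range, SetCoe.exists]
  rw [← hrange, finrank_span_eq_card hon.linearIndependent]

open scoped InnerProductSpace in
lemma weyl_one_sided {P R : Matrix (Fin r) (Fin r) ℂ} (hP : P.IsHermitian) (hR : R.IsHermitian)
    (eP eR : Equiv.Perm (Fin r)) (ν ξ : Fin r → ℝ)
    (hν : ν = hP.eigenvalues ∘ eP) (hξ : ξ = hR.eigenvalues ∘ eR)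
    (hνdec : Antitone ν) (hξdec : Antitone ξ) (d : ℝ)
    (hd : ∀ x : EuclideanSpace ℂ (Fin r),
      (⟪x, Matrix.toEuclideanLin R x⟫_ℂ).re ≤
        (⟪x, Matrix.toEuclideanLin P x⟫_ℂ).re + d * (⟪x, x⟫_ℂ).re)
    (j : Fin r) : ξ j ≤ ν j + d := by
  classical
  set V := Submodule.span ℂ (⇑hR.eigenvectorBasis '' (⇑eR '' Set.Iic j)) with hV
  set W := Submodule.span ℂ (⇑hP.eigenvectorBasis '' (⇑eP '' Set.Ici j)) with hW
  have hVrank : Module.finrank ℂ V = (j : ℕ) + 1 := by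
    rw [hV, finrank_span_basis_image hR eR, Fintype.card_Iic, Fin.card_Iic]
  have hWrank : Module.finrank ℂ W = r - (j : ℕ) := by
    rw [hW, finrank_span_basis_image hP eP, Fintype.card_Ici, Fin.card_Ici]
  -- the intersection is nontrivial
  have hsum : Module.finrank ℂ (V ⊔ W : Submodule ℂ (EuclideanSpace ℂ (Fin r)))
      + Module.finrank ℂ (V ⊓ W : Submodule ℂ (EuclideanSpace ℂ (Fin r)))
      = Module.finrank ℂ V + Module.finrank ℂ W :=
    Submodule.finrank_sup_add_finrank_inf_eq V W
  have htop : Module.finrank ℂ (V ⊔ W : Submodule ℂ (EuclideanSpace ℂ (Fin r))) ≤ r := by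
    have := Submodule.finrank_le (V ⊔ W)
    rwa [finrank_euclideanSpace, Fintype.card_fin] at this
  have hpos : 0 < Module.finrank ℂ (V ⊓ W : Submodule ℂ (EuclideanSpace ℂ (Fin r))) := by
    have hj : (j : ℕ) < r := j.isLt
    omega
  obtain ⟨x, hxVW, hx0⟩ : ∃ x ∈ V ⊓ W, x ≠ 0 := by
    rw [← Submodule.ne_bot_iff]
    intro h
    rw [h] at hpos
    simp at hpos
  have hxV : x ∈ V := hxVW.1
  have hxW : x ∈ W := hxVW.2
  have hnorm : 0 < (⟪x, x⟫_ℂ).re := by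
    have h : (⟪x, x⟫_ℂ).re = ‖x‖ ^ 2 := inner_self_eq_norm_sq (𝕜 := ℂ) x
    rw [h]
    have : 0 < ‖x‖ := norm_pos_iff.mpr hx0
    positivity
  have hlower : ξ j * (⟪x, x⟫_ℂ).re ≤ (⟪x, Matrix.toEuclideanLin R x⟫_ℂ).re := by
    refine quad_ge_of_mem_span hR ?_ hxV
    rintro - ⟨i, hi, rfl⟩
    have : ξ i = hR.eigenvalues (eR i) := by rw [hξ]; rfl
    rw [← this]
    exact hξdec hi
  have hupper : (⟪x, Matrix.toEuclideanLin P x⟫_ℂ).re ≤ ν j * (⟪x, x⟫_ℂ).re := by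
    refine quad_le_of_mem_span hP ?_ hxW
    rintro - ⟨i, hi, rfl⟩
    have : ν i = hP.eigenvalues (eP i) := by rw [hν]; rfl
    rw [← this]
    exact hνdec hi
  have chain : ξ j * (⟪x, x⟫_ℂ).re ≤ (ν j + d) * (⟪x, x⟫_ℂ).re := by
    calc ξ j * (⟪x, x⟫_ℂ).re ≤ (⟪x, Matrix.toEuclideanLin R x⟫_ℂ).re := hlower
      _ ≤ (⟪x, Matrix.toEuclideanLin P x⟫_ℂ).re + d * (⟪x, x⟫_ℂ).re := hd x
      _ ≤ ν j * (⟪x, x⟫_ℂ).re + d * (⟪x, x⟫_ℂ).re := by linarith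
      _ = (ν j + d) * (⟪x, x⟫_ℂ).re := by ring
  exact le_of_mul_le_mul_right chain hnorm

end Weyl

open scoped InnerProductSpace in
lemma inner_lin_eq {r : ℕ} (M : Matrix (Fin r) (Fin r) ℂ) (x : EuclideanSpace ℂ (Fin r)) :
    ⟪x, Matrix.toEuclideanLin M x⟫_ℂ =
      star (WithLp.equiv 2 (Fin r → ℂ) x) ⬝ᵥ M *ᵥ (WithLp.equiv 2 (Fin r → ℂ) x) := by
  rw [dotProduct_comm]; rfl

lemma conj_quad {n r : ℕ} (N : Matrix (Fin n) (Fin r) ℂ) (G : Matrix (Fin n) (Fin n) ℂ)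
    (x : Fin r → ℂ) :
    star x ⬝ᵥ (Nᴴ * G * N) *ᵥ x = star (N *ᵥ x) ⬝ᵥ G *ᵥ (N *ᵥ x) := by
  rw [Matrix.star_mulVec, Matrix.mulVec_mulVec, Matrix.dotProduct_mulVec,
    Matrix.dotProduct_mulVec, Matrix.vecMul_vecMul, Matrix.mul_assoc]

set_option maxHeartbeats 2000000 in
open scoped InnerProductSpace in
/-- the decreasingly sorted eigenvalues μ_j of T = Q*AQ and θ_j of the
    single-pass matrix T̃ satisfy |μ_j − θ_j| ≤ 2ε·√κ(B)·σ_max(Ω)²/σ_min(F)². -/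
theorem statement8 {n r : ℕ} (A B : Matrix (Fin n) (Fin n) ℂ)
    (hA : A.IsHermitian) (hB : B.PosDef)
    (Q : Matrix (Fin n) (Fin r) ℂ) (hQ : Qᴴ * B * Q = 1)
    (ε : ℝ) (hε : 0 ≤ ε)
    (hlow : matBnorm B (A - (B * Q) * (Qᴴ * A * Q) * (B * Q)ᴴ) ≤ 2 * ε)
    (Ω : Matrix (Fin n) (Fin r) ℂ) (hF : IsUnit (Qᴴ * B * Ω))
    (hT : (Qᴴ * A * Q).IsHermitian)
    (hT' : (((Qᴴ * B * Ω)ᴴ)⁻¹ * (Ωᴴ * A * Ω) * (Qᴴ * B * Ω)⁻¹).IsHermitian)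
    (μs θs : Fin r → ℝ) (e e' : Equiv.Perm (Fin r))
    (hμ : μs = hT.eigenvalues ∘ e) (hθ : θs = hT'.eigenvalues ∘ e')
    (hμdec : Antitone μs) (hθdec : Antitone θs) :
    ∀ j : Fin r, |μs j - θs j| ≤
      2 * ε * Real.sqrt (specNorm B * specNorm B⁻¹) * specNorm Ω ^ 2 *
        specNorm (Qᴴ * B * Ω)⁻¹ ^ 2 := by
  intro j
  haveI : Nonempty (Fin r) := ⟨j⟩
  rcases Nat.eq_zero_or_pos n with hn | hn
  · exfalso
    subst hn
    have h1 := congrFun (congrFun hQ j) j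
    simp [Matrix.mul_apply, Matrix.one_apply] at h1
  haveI : Nonempty (Fin n) := ⟨⟨0, hn⟩⟩
  set F := Qᴴ * B * Ω with hFdef
  set T := Qᴴ * A * Q with hTdef
  set E := A - (B * Q) * T * (B * Q)ᴴ with hEdef
  set Tt := (Fᴴ)⁻¹ * (Ωᴴ * A * Ω) * F⁻¹ with hTtdef
  set D := 2 * ε * Real.sqrt (specNorm B * specNorm B⁻¹) * specNorm Ω ^ 2 *
      specNorm F⁻¹ ^ 2 with hD
  have hFdet : IsUnit F.det := (Matrix.isUnit_iff_isUnit_det F).mp hF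
  have hFH : IsUnit Fᴴ.det := by rw [Matrix.det_conjTranspose]; exact hFdet.star
  have h1 : (B * Q)ᴴ * Ω = F := by
    rw [Matrix.conjTranspose_mul, hB.1.eq, hFdef]
  have h2 : Ωᴴ * (B * Q) = Fᴴ := by
    have := congrArg Matrix.conjTranspose h1
    rwa [Matrix.conjTranspose_mul, Matrix.conjTranspose_conjTranspose] at this
  have hexp : Ωᴴ * A * Ω = Ωᴴ * E * Ω + Fᴴ * T * F := by
    have hmid : Ωᴴ * ((B * Q) * T * (B * Q)ᴴ) * Ω = Fᴴ * T * F := by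
      calc Ωᴴ * ((B * Q) * T * (B * Q)ᴴ) * Ω
          = (Ωᴴ * (B * Q)) * T * ((B * Q)ᴴ * Ω) := by simp only [Matrix.mul_assoc]
        _ = Fᴴ * T * F := by rw [h1, h2]
    rw [hEdef, Matrix.mul_sub, Matrix.sub_mul, hmid]
    abel
  have hTtT : Tt = T + (Ω * F⁻¹)ᴴ * E * (Ω * F⁻¹) := by
    have hconj : (Ω * F⁻¹)ᴴ = (Fᴴ)⁻¹ * Ωᴴ := by
      rw [Matrix.conjTranspose_mul, Matrix.conjTranspose_nonsing_inv]
    have hTpart : (Fᴴ)⁻¹ * (Fᴴ * T * F) * F⁻¹ = T := by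
      calc (Fᴴ)⁻¹ * (Fᴴ * T * F) * F⁻¹ = (Fᴴ)⁻¹ * Fᴴ * T * (F * F⁻¹) := by
            simp only [Matrix.mul_assoc]
        _ = T := by
            rw [Matrix.nonsing_inv_mul _ hFH, Matrix.mul_nonsing_inv _ hFdet,
              Matrix.one_mul, Matrix.mul_one]
    rw [hTtdef, hexp, Matrix.mul_add, Matrix.add_mul, hTpart, hconj, add_comm]
    congr 1
    simp only [Matrix.mul_assoc]
  have hNm : Tt - T = (Ω * F⁻¹)ᴴ * E * (Ω * F⁻¹) := by
    rw [hTtT]; abel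
  have hκpos : (0:ℝ) ≤ Real.sqrt (specNorm B * specNorm B⁻¹) := Real.sqrt_nonneg _
  have hquad : ∀ x : Fin r → ℂ, |(star x ⬝ᵥ (Tt - T) *ᵥ x).re| ≤ D * (star x ⬝ᵥ x).re := by
    intro x
    rw [← vecNorm2_sq, hNm, conj_quad]
    set z := (Ω * F⁻¹) *ᵥ x with hz
    have hz2 : vecNorm2 z ≤ specNorm Ω * specNorm F⁻¹ * vecNorm2 x := by
      rw [hz, ← Matrix.mulVec_mulVec]
      calc vecNorm2 (Ω *ᵥ (F⁻¹ *ᵥ x)) ≤ specNorm Ω * vecNorm2 (F⁻¹ *ᵥ x) :=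
            vecNorm2_mulVec_le _ _
        _ ≤ specNorm Ω * (specNorm F⁻¹ * vecNorm2 x) :=
            mul_le_mul_of_nonneg_left (vecNorm2_mulVec_le _ _) (specNorm_nonneg Ω)
        _ = specNorm Ω * specNorm F⁻¹ * vecNorm2 x := by ring
    have hz2sq : vecNorm2 z ^ 2 ≤ specNorm Ω ^ 2 * specNorm F⁻¹ ^ 2 * vecNorm2 x ^ 2 := by
      calc vecNorm2 z ^ 2 ≤ (specNorm Ω * specNorm F⁻¹ * vecNorm2 x) ^ 2 :=
            pow_le_pow_left₀ (vecNorm2_nonneg z) hz2 2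
        _ = specNorm Ω ^ 2 * specNorm F⁻¹ ^ 2 * vecNorm2 x ^ 2 := by ring
    calc |(star z ⬝ᵥ E *ᵥ z).re|
        ≤ matBnorm B E * Real.sqrt (specNorm B * specNorm B⁻¹) * vecNorm2 z ^ 2 :=
          quad_re_abs_le hB E z
      _ ≤ 2 * ε * Real.sqrt (specNorm B * specNorm B⁻¹) * vecNorm2 z ^ 2 :=
          mul_le_mul_of_nonneg_right (mul_le_mul_of_nonneg_right hlow hκpos) (sq_nonneg _)
      _ ≤ 2 * ε * Real.sqrt (specNorm B * specNorm B⁻¹) *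
            (specNorm Ω ^ 2 * specNorm F⁻¹ ^ 2 * vecNorm2 x ^ 2) :=
          mul_le_mul_of_nonneg_left hz2sq (by positivity)
      _ = D * vecNorm2 x ^ 2 := by rw [hD]; ring
  have hlin : ∀ x : EuclideanSpace ℂ (Fin r),
      (⟪x, Matrix.toEuclideanLin Tt x⟫_ℂ).re = (⟪x, Matrix.toEuclideanLin T x⟫_ℂ).re
        + (⟪x, Matrix.toEuclideanLin (Tt - T) x⟫_ℂ).re := by
    intro x
    have hsplit : Tt = T + (Tt - T) := by abel
    conv_lhs => rw [hsplit]
    rw [map_add, LinearMap.add_apply, inner_add_right, Complex.add_re]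
  have hxx : ∀ x : EuclideanSpace ℂ (Fin r),
      (⟪x, x⟫_ℂ).re = (star (WithLp.equiv 2 (Fin r → ℂ) x) ⬝ᵥ
        (WithLp.equiv 2 (Fin r → ℂ) x)).re := fun x => by rw [dotProduct_comm]; rfl
  have hd1 : ∀ x : EuclideanSpace ℂ (Fin r),
      (⟪x, Matrix.toEuclideanLin Tt x⟫_ℂ).re ≤
        (⟪x, Matrix.toEuclideanLin T x⟫_ℂ).re + D * (⟪x, x⟫_ℂ).re := by
    intro x
    rw [hlin x, hxx x]
    have h := hquad (WithLp.equiv 2 (Fin r → ℂ) x)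
    simp only [inner_lin_eq]
    linarith [(abs_le.mp h).2]
  have hd2 : ∀ x : EuclideanSpace ℂ (Fin r),
      (⟪x, Matrix.toEuclideanLin T x⟫_ℂ).re ≤
        (⟪x, Matrix.toEuclideanLin Tt x⟫_ℂ).re + D * (⟪x, x⟫_ℂ).re := by
    intro x
    rw [hlin x, hxx x]
    have h := hquad (WithLp.equiv 2 (Fin r → ℂ) x)
    simp only [inner_lin_eq]
    linarith [(abs_le.mp h).1]
  have w1 := weyl_one_sided hT hT' e e' μs θs hμ hθ hμdec hθdec D hd1 j
  have w2 := weyl_one_sided hT' hT e' e θs μs hθ hμ hθdec hμdec D hd2 j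
  rw [abs_sub_le_iff]
  constructor <;> linarith
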